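/- For all integers n ≥ 0 and j ≥ 0, 4^n · Σ_{i=j}^{n} C(2i,i) C(i,j) / 4^i = ((2n+1)/(2j+1)) · C(n,j) · C(2n,n). -/

import Mathlib

open Finset

lemma aux_central (n : ℕ) :
    ((Nat.choose (2 * (n + 1)) (n + 1) : ℚ)) * (n + 1) =
      2 * (2 * n + 1) * Nat.choose (2 * n) n := by
  have h := Nat.succ_mul_centralBinom_succ n
  have h' : ((n + 1) * Nat.centralBinom (n + 1) : ℚ) =
      (2 * (2 * n + 1) * Nat.centralBinom n : ℚ) := by exact_mod_cast congrArg (Nat.cast (R := ℚ)) h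
  simp [Nat.centralBinom] at h'
  linarith

lemma aux_choose (n j : ℕ) :
    ((Nat.choose n j : ℚ)) * (n + 1) = Nat.choose (n + 1) j * ((n : ℚ) + 1 - j) := by
  rcases le_or_gt j (n + 1) with h | h
  · have := Nat.choose_mul_succ_eq n j
    have h' : ((Nat.choose n j * (n + 1) : ℕ) : ℚ) =
        ((Nat.choose (n + 1) j * (n + 1 - j) : ℕ) : ℚ) := by exact_mod_cast this
    push_cast [Nat.cast_sub h] at h'
    linarith
  · rw [Nat.choose_eq_zero_of_lt (by omega), Nat.choose_eq_zero_of_lt (by omega)]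
    simp

/-- `4^n ∑_{i=j}^{n} C(2i,i) C(i,j) / 4^i = ((2n+1)/(2j+1)) C(n,j) C(2n,n)`. -/
theorem stmt6 (n j : ℕ) :
    (4 : ℚ) ^ n * ∑ i ∈ Finset.Icc j n,
        (Nat.choose (2 * i) i : ℚ) * (Nat.choose i j : ℚ) / 4 ^ i =
      ((2 * n + 1 : ℚ) / (2 * j + 1 : ℚ)) * (Nat.choose n j : ℚ) *
        (Nat.choose (2 * n) n : ℚ) := by
  induction n with
  | zero =>
    rcases Nat.eq_zero_or_pos j with rfl | hj
    · norm_num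
    · rw [Finset.Icc_eq_empty (by omega), Nat.choose_eq_zero_of_lt (by omega)]
      simp
  | succ n ih =>
    rcases le_or_gt j (n + 1) with hj | hj
    · rw [Finset.sum_Icc_succ_top hj]
      have ha := aux_central n
      have hb := aux_choose n j
      have hjq : (2 * (j:ℚ) + 1) ≠ 0 := by positivity
      have h4 : ((4:ℚ) ^ n) ≠ 0 := by positivity
      have key : 4 * (2*(n:ℚ)+1) * (Nat.choose n j) * (Nat.choose (2*n) n) =
          2 * ((n:ℚ)+1-j) * (Nat.choose (n+1) j) * (Nat.choose (2*(n+1)) (n+1)) := by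
        have hn : ((n:ℚ)+1) ≠ 0 := by positivity
        apply mul_left_cancel₀ hn
        linear_combination (4*(2*(n:ℚ)+1)*(Nat.choose (2*n) n)) * hb -
          (2*((n:ℚ)+1-j)*(Nat.choose (n+1) j)) * ha
      field_simp at ih ⊢
      push_cast at ih ⊢
      linear_combination 4*ih + key
    · rw [Finset.Icc_eq_empty (by omega), Nat.choose_eq_zero_of_lt (by omega)]
      simp
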